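/- Let p be an odd prime, n ≥ 4, and let P_0, …, P_{n-1} ∈ F_p^d be an equilateral set with common squared distance Δ ≠ 0. Then the set M = {(P_i + P_j)/2 : 0 ≤ i < j ≤ n−1} of all edge midpoints is a two-distance set of size n(n−1)/2: it has exactly n(n−1)/2 elements, and the set of values dist²(x, y) over distinct x, y ∈ M is exactly {Δ/4, Δ/2}, which are two distinct nonzero elements of F_p. -/

import Mathlib

theorem pair_card (n : ℕ) :
    ((Finset.univ : Finset (Fin n × Fin n)).filter (fun q => q.1 < q.2)).card
      = n * (n - 1) / 2 := by
  set S := (Finset.univ : Finset (Fin n × Fin n)).filter (fun q => q.1 < q.2) with hS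
  set T := (Finset.univ : Finset (Fin n × Fin n)).filter (fun q => q.2 < q.1) with hT
  have hcards : S.card = T.card := by
    apply Finset.card_nbij (fun q => q.swap)
    · intro q hq
      simp only [hS, hT, Finset.mem_filter, Finset.mem_univ, true_and] at *
      simpa using hq
    · intro a ha b hb h
      exact Prod.swap_injective h
    · intro b hb
      refine ⟨b.swap, ?_, by simp⟩
      simp only [hS, hT, Finset.coe_filter, Finset.mem_univ, Set.mem_setOf_eq, true_and,
        Prod.fst_swap, Prod.snd_swap] at *
      exact hb
  have hdisj : Disjoint S T := by
    rw [Finset.disjoint_left]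
    intro a ha hb
    simp only [hS, hT, Finset.mem_filter] at ha hb
    exact absurd hb.2 (asymm ha.2)
  have hunion : S ∪ T = (Finset.univ : Finset (Fin n)).offDiag := by
    ext q
    simp only [hS, hT, Finset.mem_union, Finset.mem_filter, Finset.mem_offDiag,
      Finset.mem_univ, true_and]
    constructor
    · rintro (h | h) <;> [exact ne_of_lt h; exact (ne_of_lt h).symm]
    · intro h; exact lt_or_gt_of_ne h
  have hcard := Finset.card_union_of_disjoint hdisj
  rw [hunion, Finset.offDiag_card, ← hcards, Finset.card_univ, Fintype.card_fin] at hcard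
  have h2 : 2 * S.card = n * (n - 1) := by
    have : n * (n - 1) = n * n - n := by
      cases n with
      | zero => simp
      | succ m => rw [Nat.succ_sub_one]; ring_nf; omega
    omega
  omega

/-- Let `p` be an odd prime, `n ≥ 4`, and `P_0, …, P_{n-1} ∈ 𝔽_p^d`
equilateral with common squared distance `Δ ≠ 0`. Then the set `M` of all edge midpoints
`(P_i + P_j)/2` (for `i < j`) is a two-distance set of size `n(n-1)/2`: it has exactly
`n(n-1)/2` elements, and the set of values `dist²(x, y)` over distinct `x, y ∈ M` is
exactly `{Δ/4, Δ/2}`, two distinct nonzero elements of `𝔽_p`. -/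
theorem stmt_10 (p : ℕ) [Fact p.Prime] (hp2 : p ≠ 2) (d n : ℕ) (hn : 4 ≤ n)
    (Δ : ZMod p) (hΔ : Δ ≠ 0)
    (P : Fin n → Fin d → ZMod p) (hinj : Function.Injective P)
    (hdist : ∀ i j, i ≠ j → ∑ t, (P i t - P j t) ^ 2 = Δ) :
    ∀ M : Set (Fin d → ZMod p),
      M = {x | ∃ i j : Fin n, i < j ∧ x = (2 : ZMod p)⁻¹ • (P i + P j)} →
      M.ncard = n * (n - 1) / 2 ∧
        {v : ZMod p | ∃ x ∈ M, ∃ y ∈ M, x ≠ y ∧ v = ∑ t, (x t - y t) ^ 2}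
          = {Δ / 4, Δ / 2} ∧
        Δ / 4 ≠ Δ / 2 ∧ Δ / 4 ≠ 0 ∧ Δ / 2 ≠ 0 := by
  intro M hM
  subst hM
  have h2 : (2 : ZMod p) ≠ 0 := by
    intro h
    have : ((2 : ℕ) : ZMod p) = 0 := by exact_mod_cast h
    rw [ZMod.natCast_eq_zero_iff] at this
    have hp := (Fact.out : p.Prime)
    exact hp2 ((Nat.prime_dvd_prime_iff_eq hp Nat.prime_two).mp this)
  have h4 : (4 : ZMod p) ≠ 0 := by
    have : (4 : ZMod p) = 2 * 2 := by norm_num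
    rw [this]
    exact mul_ne_zero h2 h2
  set m : Fin n → Fin n → (Fin d → ZMod p) :=
    fun i j => (2 : ZMod p)⁻¹ • (P i + P j) with hm
  have msymm : ∀ i j, m i j = m j i := by
    intro i j; simp [hm, add_comm]
  have hgen : ∀ a b c e : Fin n, ∑ t, (m a b t - m c e t) ^ 2
      = 4⁻¹ * ((∑ t, (P a t - P c t) ^ 2) + (∑ t, (P b t - P e t) ^ 2)
        + (∑ t, (P a t - P e t) ^ 2) + (∑ t, (P b t - P c t) ^ 2)
        - (∑ t, (P a t - P b t) ^ 2) - (∑ t, (P c t - P e t) ^ 2)) := by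
    intro a b c e
    rw [← Finset.sum_add_distrib, ← Finset.sum_add_distrib, ← Finset.sum_add_distrib,
      ← Finset.sum_sub_distrib, ← Finset.sum_sub_distrib, Finset.mul_sum]
    apply Finset.sum_congr rfl
    intro t _
    simp only [hm, Pi.smul_apply, Pi.add_apply, smul_eq_mul]
    field_simp
    ring
  have hQ0 : ∀ a : Fin n, ∑ t, (P a t - P a t) ^ 2 = 0 := by
    intro a; simp
  have keyshare : ∀ a b e : Fin n, a ≠ b → a ≠ e → b ≠ e →
      ∑ t, (m a b t - m a e t) ^ 2 = Δ / 4 := by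
    intro a b e hab hae hbe
    rw [hgen, hQ0, hdist b e hbe, hdist a e hae, hdist b a (Ne.symm hab),
      hdist a b hab]
    field_simp
    ring
  have keydisj : ∀ a b c e : Fin n, a ≠ b → a ≠ c → a ≠ e → b ≠ c → b ≠ e → c ≠ e →
      ∑ t, (m a b t - m c e t) ^ 2 = Δ / 2 := by
    intro a b c e hab hac hae hbc hbe hce
    rw [hgen, hdist a c hac, hdist b e hbe, hdist a e hae, hdist b c hbc,
      hdist a b hab, hdist c e hce]
    have h42 : (4 : ZMod p) = 2 * 2 := by norm_num
    field_simp [h42]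
    ring
  have key : ∀ i j k l : Fin n, i < j → k < l → (i, j) ≠ (k, l) →
      ∑ t, (m i j t - m k l t) ^ 2 = Δ / 4 ∨ ∑ t, (m i j t - m k l t) ^ 2 = Δ / 2 := by
    intro i j k l hij hkl hne
    by_cases hik : i = k
    · subst hik
      have hjl : j ≠ l := fun h => hne (by rw [h])
      exact Or.inl (keyshare i j l (ne_of_lt hij) (ne_of_lt hkl) hjl)
    · by_cases hil : i = l
      · subst hil
        -- k < i < j
        rw [msymm k i]
        exact Or.inl (keyshare i j k (ne_of_lt hij) (Ne.symm (ne_of_lt hkl)) (Ne.symm (ne_of_lt (lt_trans hkl hij))))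
      · by_cases hjk : j = k
        · subst hjk
          rw [msymm i j]
          exact Or.inl (keyshare j i l (Ne.symm (ne_of_lt hij)) (ne_of_lt hkl) (ne_of_lt (lt_trans hij hkl)))
        · by_cases hjl : j = l
          · subst hjl
            rw [msymm i j, msymm k j]
            exact Or.inl (keyshare j i k (Ne.symm (ne_of_lt hij)) (Ne.symm (ne_of_lt hkl)) hik)
          · exact Or.inr (keydisj i j k l (ne_of_lt hij) hik hil hjk hjl (ne_of_lt hkl))
  have hΔ4 : Δ / 4 ≠ 0 := div_ne_zero hΔ h4
  have hΔ2 : Δ / 2 ≠ 0 := div_ne_zero hΔ h2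
  have hsumzero : ∀ x y : Fin d → ZMod p, x = y → ∑ t, (x t - y t) ^ 2 = 0 := by
    intro x y h; subst h; simp
  -- distinct pairs give distinct midpoints
  have hmne : ∀ i j k l : Fin n, i < j → k < l → (i, j) ≠ (k, l) → m i j ≠ m k l := by
    intro i j k l hij hkl hne heq
    rcases key i j k l hij hkl hne with h | h <;>
      rw [hsumzero _ _ heq] at h
    · exact hΔ4 h.symm
    · exact hΔ2 h.symm
  have hΔ42 : Δ / 4 ≠ Δ / 2 := by
    intro h
    rw [div_eq_div_iff h4 h2] at h
    have : Δ * 2 = 0 := by linear_combination -h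
    exact (mul_ne_zero hΔ h2) this
  refine ⟨?_, ?_, hΔ42, hΔ4, hΔ2⟩
  · -- cardinality
    set S := (Finset.univ : Finset (Fin n × Fin n)).filter (fun q => q.1 < q.2) with hS
    have hMeq : {x | ∃ i j : Fin n, i < j ∧ x = (2 : ZMod p)⁻¹ • (P i + P j)}
        = ↑(S.image (fun q => m q.1 q.2)) := by
      ext x
      simp only [hS, Set.mem_setOf_eq, Finset.coe_image, Set.mem_image, Finset.mem_coe,
        Finset.mem_filter, Finset.mem_univ, true_and]
      constructor
      · rintro ⟨i, j, hij, rfl⟩; exact ⟨(i, j), hij, rfl⟩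
      · rintro ⟨⟨i, j⟩, hij, rfl⟩; exact ⟨i, j, hij, rfl⟩
    rw [hMeq, Set.ncard_coe_finset]
    rw [Finset.card_image_of_injOn, pair_card]
    intro q hq r hr h
    simp only [hS, Finset.mem_coe, Finset.mem_filter, Finset.mem_univ, true_and] at hq hr
    by_contra hne
    exact hmne q.1 q.2 r.1 r.2 hq hr (by
      intro hc
      exact hne (Prod.ext (congrArg Prod.fst hc) (congrArg Prod.snd hc))) h
  · -- value set
    ext v
    simp only [Set.mem_setOf_eq, Set.mem_insert_iff, Set.mem_singleton_iff]
    constructor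
    · rintro ⟨x, ⟨i, j, hij, rfl⟩, y, ⟨k, l, hkl, rfl⟩, hne, rfl⟩
      have hpne : (i, j) ≠ (k, l) := by
        rintro h
        rw [Prod.mk.injEq] at h
        exact hne (by rw [h.1, h.2])
      exact key i j k l hij hkl hpne
    · have ha0 : (0 : ℕ) < n := by omega
      have ha1 : (1 : ℕ) < n := by omega
      have ha2 : (2 : ℕ) < n := by omega
      have ha3 : (3 : ℕ) < n := by omega
      set a0 : Fin n := ⟨0, ha0⟩
      set a1 : Fin n := ⟨1, ha1⟩
      set a2 : Fin n := ⟨2, ha2⟩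
      set a3 : Fin n := ⟨3, ha3⟩
      have h01 : a0 < a1 := by simp [a0, a1, Fin.mk_lt_mk]
      have h02 : a0 < a2 := by simp [a0, a2, Fin.mk_lt_mk]
      have h23 : a2 < a3 := by simp [a2, a3, Fin.mk_lt_mk]
      have hne01 : a0 ≠ a1 := ne_of_lt h01
      have hne02 : a0 ≠ a2 := ne_of_lt h02
      have hne12 : a1 ≠ a2 := by simp [a1, a2, Fin.ne_iff_vne]
      have hne03 : a0 ≠ a3 := by simp [a0, a3, Fin.ne_iff_vne]
      have hne13 : a1 ≠ a3 := by simp [a1, a3, Fin.ne_iff_vne]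
      have hne23 : a2 ≠ a3 := ne_of_lt h23
      rintro (rfl | rfl)
      · refine ⟨m a0 a1, ⟨a0, a1, h01, rfl⟩, m a0 a2, ⟨a0, a2, h02, rfl⟩, ?_, ?_⟩
        · exact hmne a0 a1 a0 a2 h01 h02 (by simp [Prod.ext_iff, hne12])
        · exact (keyshare a0 a1 a2 hne01 hne02 hne12).symm
      · refine ⟨m a0 a1, ⟨a0, a1, h01, rfl⟩, m a2 a3, ⟨a2, a3, h23, rfl⟩, ?_, ?_⟩
        · exact hmne a0 a1 a2 a3 h01 h23 (by simp [Prod.ext_iff, hne02])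
        · exact (keydisj a0 a1 a2 a3 hne01 hne02 hne03 hne12 hne13 hne23).symm
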